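/- arXiv:math/0305097 — 2 statements merged into one kernel-verified Lean document; each statement's English description precedes it below -/
import Mathlib

section
/- (Gronwall-type limit lemma) Let w ∈ L¹(0,1) with w ≥ 0 and ∫₀¹ w(s) ds < 1. Let f, g : (0,∞) → [0,∞) be bounded functions satisfying f(t) ≤ g(t) + ∫₀¹ w(s) f(st) ds for all t > 0. If lim_{t→∞} g(t) = 0, then lim_{t→∞} f(t) = 0. -/
open MeasureTheory Set Filter

/-- Gronwall-type limit lemma: if `w ∈ L¹(0,1)` is nonnegative with
`∫₀¹ w < 1`, and the bounded nonnegative measurable functions `f, g` satisfy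
`f(t) ≤ g(t) + ∫₀¹ w(s) f(st) ds` for all `t > 0`, then `g(t) → 0` as `t → ∞`
implies `f(t) → 0` as `t → ∞`. -/
theorem gronwall_type_limit_lemma
    (w f g : ℝ → ℝ)
    (hw_int : IntegrableOn w (Ioo 0 1) volume)
    (hw_nonneg : ∀ s ∈ Ioo (0 : ℝ) 1, 0 ≤ w s)
    (hw_lt : ∫ s in Ioo (0 : ℝ) 1, w s < 1)
    (hf_meas : Measurable f)
    (hf_nonneg : ∀ t : ℝ, 0 < t → 0 ≤ f t)
    (hg_nonneg : ∀ t : ℝ, 0 < t → 0 ≤ g t)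
    (hf_bdd : ∃ M : ℝ, ∀ t : ℝ, 0 < t → f t ≤ M)
    (hg_bdd : ∃ M : ℝ, ∀ t : ℝ, 0 < t → g t ≤ M)
    (hineq : ∀ t : ℝ, 0 < t → f t ≤ g t + ∫ s in Ioo (0 : ℝ) 1, w s * f (s * t))
    (hg_lim : Tendsto g atTop (nhds 0)) :
    Tendsto f atTop (nhds 0) := by
  obtain ⟨M, hM⟩ := hf_bdd
  have hM0 : 0 ≤ M := le_trans (hf_nonneg 1 one_pos) (hM 1 one_pos)
  set C : ℝ := ∫ s in Ioo (0 : ℝ) 1, w s with hCdef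
  have hC0 : 0 ≤ C := setIntegral_nonneg measurableSet_Ioo hw_nonneg
  have hwae : 0 ≤ᵐ[volume.restrict (Ioo (0:ℝ) 1)] w :=
    (ae_restrict_iff' measurableSet_Ioo).2 (Filter.Eventually.of_forall hw_nonneg)
  have hev_pos : ∀ᶠ t : ℝ in atTop, 0 < t := eventually_gt_atTop 0
  have hub : IsBoundedUnder (· ≤ ·) atTop f :=
    ⟨M, eventually_map.2 (by filter_upwards [hev_pos] with t ht using hM t ht)⟩
  have hlb : IsBoundedUnder (· ≥ ·) atTop f :=
    ⟨0, eventually_map.2 (by filter_upwards [hev_pos] with t ht using hf_nonneg t ht)⟩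
  set L : ℝ := limsup f atTop with hLdef
  have hL0 : 0 ≤ L :=
    le_limsup_of_frequently_le
      ((hev_pos.mono fun t ht => hf_nonneg t ht).frequently) hub
  -- integrability of the integrand
  have hFint : ∀ t : ℝ, 0 < t →
      IntegrableOn (fun s => w s * f (s * t)) (Ioo 0 1) volume := by
    intro t ht
    apply Integrable.mono' (hw_int.const_mul M)
    · exact hw_int.aestronglyMeasurable.mul
        ((hf_meas.comp (measurable_id.mul_const t)).aestronglyMeasurable)
    · refine (ae_restrict_iff' measurableSet_Ioo).2 (Filter.Eventually.of_forall fun s hs => ?_)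
      have hst : 0 < s * t := mul_pos hs.1 ht
      rw [Real.norm_eq_abs,
        abs_of_nonneg (mul_nonneg (hw_nonneg s hs) (hf_nonneg _ hst))]
      calc w s * f (s * t) ≤ w s * M :=
            mul_le_mul_of_nonneg_left (hM _ hst) (hw_nonneg s hs)
        _ = M * w s := mul_comm _ _
  -- key estimate
  have key : ∀ δ ∈ Ioo (0:ℝ) 1, ∀ ε > (0:ℝ),
      L ≤ M * (∫ s in Ioo (0:ℝ) δ, w s) + (L + ε) * C := by
    intro δ hδ ε hε
    have hLε : L < L + ε := lt_add_of_pos_right L hε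
    obtain ⟨T, hT⟩ := eventually_atTop.1 (eventually_lt_of_limsup_lt hLε hub)
    set Iδ : ℝ := ∫ s in Ioo (0:ℝ) δ, w s with hIdef
    have sub1 : Ioo (0:ℝ) δ ⊆ Ioo (0:ℝ) 1 := Ioo_subset_Ioo le_rfl hδ.2.le
    have sub2 : Ico δ (1:ℝ) ⊆ Ioo (0:ℝ) 1 :=
      fun s hs => ⟨lt_of_lt_of_le hδ.1 hs.1, hs.2⟩
    have hbound : ∀ᶠ t in atTop, f t ≤ g t + (M * Iδ + (L + ε) * C) := by
      filter_upwards [eventually_ge_atTop (max (T / δ) 1)] with t ht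
      have ht1 : (1:ℝ) ≤ t := le_trans (le_max_right _ _) ht
      have htpos : 0 < t := lt_of_lt_of_le one_pos ht1
      have hsplit : Ioo (0:ℝ) 1 = Ioo 0 δ ∪ Ico δ 1 :=
        (Ioo_union_Ico_eq_Ioo hδ.1 hδ.2.le).symm
      have hint := hFint t htpos
      have hint1 : IntegrableOn (fun s => w s * f (s * t)) (Ioo 0 δ) volume :=
        hint.mono_set sub1
      have hint2 : IntegrableOn (fun s => w s * f (s * t)) (Ico δ 1) volume :=
        hint.mono_set sub2
      have hdisj : Disjoint (Ioo (0:ℝ) δ) (Ico δ 1) :=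
        Set.disjoint_left.2 fun x hx1 hx2 => absurd hx2.1 (not_le.2 hx1.2)
      have heq : (∫ s in Ioo (0:ℝ) 1, w s * f (s * t))
          = (∫ s in Ioo (0:ℝ) δ, w s * f (s * t))
            + (∫ s in Ico δ (1:ℝ), w s * f (s * t)) := by
        rw [hsplit]
        exact setIntegral_union hdisj measurableSet_Ico hint1 hint2
      have hb1 : (∫ s in Ioo (0:ℝ) δ, w s * f (s * t)) ≤ M * Iδ := by
        have h1 : (∫ s in Ioo (0:ℝ) δ, w s * f (s * t))
            ≤ ∫ s in Ioo (0:ℝ) δ, M * w s := by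
          apply setIntegral_mono_on hint1 (IntegrableOn.mono_set (hw_int.const_mul M) sub1)
            measurableSet_Ioo
          intro s hs
          have hs' : s ∈ Ioo (0:ℝ) 1 := sub1 hs
          have := mul_le_mul_of_nonneg_left (hM _ (mul_pos hs.1 htpos))
            (hw_nonneg s hs')
          linarith [this]
        rwa [integral_const_mul] at h1
      have hb2 : (∫ s in Ico δ (1:ℝ), w s * f (s * t)) ≤ (L + ε) * C := by
        have hLε0 : 0 ≤ L + ε := by linarith
        have step1 : (∫ s in Ico δ (1:ℝ), w s * f (s * t))
            ≤ ∫ s in Ico δ (1:ℝ), w s * (L + ε) := by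
          apply setIntegral_mono_on hint2 (IntegrableOn.mono_set (hw_int.mul_const (L + ε)) sub2)
            measurableSet_Ico
          intro s hs
          have hs' : s ∈ Ioo (0:ℝ) 1 := sub2 hs
          have hTt : T / δ ≤ t := le_trans (le_max_left _ _) ht
          have hstT : T ≤ s * t := by
            have h2 : T ≤ δ * t := by
              rw [← div_le_iff₀' hδ.1]; exact hTt
            calc T ≤ δ * t := h2
              _ ≤ s * t := mul_le_mul_of_nonneg_right hs.1 htpos.le
          exact mul_le_mul_of_nonneg_left (le_of_lt (hT _ hstT)) (hw_nonneg s hs')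
        have step2 : (∫ s in Ico δ (1:ℝ), w s) ≤ C :=
          setIntegral_mono_set hw_int hwae (HasSubset.Subset.eventuallyLE sub2)
        calc (∫ s in Ico δ (1:ℝ), w s * f (s * t))
            ≤ ∫ s in Ico δ (1:ℝ), w s * (L + ε) := step1
          _ = (∫ s in Ico δ (1:ℝ), w s) * (L + ε) := integral_mul_const _ _
          _ ≤ C * (L + ε) := mul_le_mul_of_nonneg_right step2 hLε0
          _ = (L + ε) * C := mul_comm _ _
      calc f t ≤ g t + ∫ s in Ioo (0:ℝ) 1, w s * f (s * t) := hineq t htpos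
        _ = g t + ((∫ s in Ioo (0:ℝ) δ, w s * f (s * t))
            + (∫ s in Ico δ (1:ℝ), w s * f (s * t))) := by rw [heq]
        _ ≤ g t + (M * Iδ + (L + ε) * C) := by linarith
    have htend : Tendsto (fun t => g t + (M * Iδ + (L + ε) * C)) atTop
        (nhds (0 + (M * Iδ + (L + ε) * C))) := hg_lim.add_const _
    have hls := limsup_le_limsup hbound hlb.isCoboundedUnder_le
      htend.isBoundedUnder_le
    rw [htend.limsup_eq] at hls
    calc L ≤ 0 + (M * Iδ + (L + ε) * C) := hls
      _ = M * Iδ + (L + ε) * C := by ring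
  -- remove ε
  have key2 : ∀ δ ∈ Ioo (0:ℝ) 1, L ≤ M * (∫ s in Ioo (0:ℝ) δ, w s) + L * C := by
    intro δ hδ
    by_contra hcon
    push_neg at hcon
    set X : ℝ := M * (∫ s in Ioo (0:ℝ) δ, w s) + L * C with hX
    have hε : (0:ℝ) < (L - X) / 2 := by simp only [hX] at hcon ⊢; linarith
    have := key δ hδ _ hε
    have hC1 : C ≤ 1 := hw_lt.le
    nlinarith [this, hC0, hC1, hε]
  -- the small-δ integral can be made arbitrarily small
  have hsmall : ∀ η > (0:ℝ), ∃ δ ∈ Ioo (0:ℝ) 1, (∫ s in Ioo (0:ℝ) δ, w s) < η := by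
    intro η hη
    have hanti : Antitone (fun n : ℕ => Ioo (0:ℝ) (1 / (n + 2))) := by
      intro m n hmn
      apply Ioo_subset_Ioo le_rfl
      apply one_div_le_one_div_of_le
      · positivity
      · push_cast; exact_mod_cast by exact_mod_cast add_le_add_left (Nat.cast_le.2 hmn) 2
    have hinter : (⋂ n : ℕ, Ioo (0:ℝ) (1 / (n + 2))) = ∅ := by
      ext x
      simp only [mem_iInter, mem_Ioo, mem_empty_iff_false, iff_false, not_forall, not_and,
        not_lt]
      by_cases hx : 0 < x
      · obtain ⟨n, hn⟩ := exists_nat_gt (1 / x)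
        refine ⟨n, fun _ => ?_⟩
        rw [div_le_iff₀ (by positivity)]
        have h1 : 1 < x * n := by
          rw [div_lt_iff₀ hx] at hn; linarith
        nlinarith
      · exact ⟨0, fun h => absurd h hx⟩
    have hfi : ∃ n : ℕ, IntegrableOn w (Ioo (0:ℝ) (1 / (n + 2))) volume :=
      ⟨0, hw_int.mono_set (Ioo_subset_Ioo le_rfl (by norm_num))⟩
    have htend := tendsto_setIntegral_of_antitone
      (f := w) (μ := volume) (fun n : ℕ => measurableSet_Ioo) hanti hfi
    rw [hinter] at htend
    simp only [Measure.restrict_empty, integral_zero_measure] at htend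
    obtain ⟨n, hn⟩ := (htend.eventually (gt_mem_nhds hη)).exists
    refine ⟨1 / (n + 2), ⟨by positivity, ?_⟩, hn⟩
    rw [div_lt_one (by positivity)]
    have hn0 : (0:ℝ) ≤ (n:ℝ) := Nat.cast_nonneg n
    linarith
  -- conclude limsup ≤ 0
  have hLle : L ≤ 0 := by
    by_contra h
    push_neg at h
    have hC1 : 1 - C > 0 := by linarith
    have hKpos : 0 < L * (1 - C) := mul_pos h hC1
    obtain ⟨δ, hδ, hIlt⟩ := hsmall (L * (1 - C) / (M + 1)) (by positivity)
    have hk := key2 δ hδ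
    have hI0 : 0 ≤ ∫ s in Ioo (0:ℝ) δ, w s :=
      setIntegral_nonneg measurableSet_Ioo
        (fun s hs => hw_nonneg s (Ioo_subset_Ioo le_rfl hδ.2.le hs))
    have h1 : M * (∫ s in Ioo (0:ℝ) δ, w s) ≤ M * (L * (1 - C) / (M + 1)) :=
      mul_le_mul_of_nonneg_left hIlt.le hM0
    have h2 : M * (L * (1 - C) / (M + 1)) < L * (1 - C) := by
      rw [mul_div_assoc', div_lt_iff₀ (by linarith : (0:ℝ) < M + 1)]
      nlinarith
    nlinarith
  have hliminf : (0:ℝ) ≤ liminf f atTop :=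
    le_liminf_of_le hub.isCoboundedUnder_ge
      (by filter_upwards [hev_pos] with t ht using hf_nonneg t ht)
  exact tendsto_of_le_liminf_of_limsup_le hliminf hLle hub hlb
end

section
/- (Convolution approximation estimate) There exists a constant C such that for all f ∈ L¹(ℝⁿ, (1+|x|)dx) and all g ∈ W^{1,1}(ℝⁿ), ‖f*g − (∫_{ℝⁿ} f dx) g‖_{L¹} ≤ C ‖∇g‖_{L¹} ‖f‖_{L¹(ℝⁿ, |x| dx)}. -/
open MeasureTheory Real Set
open scoped ENNReal Convolution

variable {n : ℕ}

local notation "E" => EuclideanSpace ℝ (Fin n)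

lemma transA (g : E → ℝ) (hg : Differentiable ℝ g) (v : E) :
    ∫⁻ x : E, ‖g (x - v) - g x‖₊ ≤ ‖v‖₊ * ∫⁻ x : E, ‖fderiv ℝ g x‖₊ := by
  set K : ℝ≥0∞ := ∫⁻ x : E, ‖fderiv ℝ g x‖₊ with hKdef
  rcases eq_or_ne v 0 with rfl | hv
  · simp
  rcases eq_or_ne K ∞ with hK | hK
  · rw [hK, ENNReal.mul_top (by simpa using hv)]
    exact le_top
  -- measurability facts
  have hmap : Measurable fun p : ℝ × E => (p.2 - p.1 • v : E) :=
    measurable_snd.sub (measurable_fst.smul_const v)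
  have hfd : Measurable (fderiv ℝ g) := measurable_fderiv ℝ g
  have hmeasP : Measurable fun p : ℝ × E => (‖fderiv ℝ g (p.2 - p.1 • v)‖₊ : ℝ≥0∞) :=
    (hfd.comp hmap).enorm
  have htrans : ∀ t : ℝ, ∫⁻ x : E, (‖fderiv ℝ g (x - t • v)‖₊ : ℝ≥0∞) = K := fun t =>
    lintegral_sub_right_eq_self (fun x => (‖fderiv ℝ g x‖₊ : ℝ≥0∞)) (t • v)
  set A : E → ℝ≥0∞ := fun x => ∫⁻ t in Ioc (0:ℝ) 1, (‖fderiv ℝ g (x - t • v)‖₊ : ℝ≥0∞)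
    with hAdef
  have hAmeas : Measurable A := by
    apply Measurable.lintegral_prod_left (f := fun t x => (‖fderiv ℝ g (x - t • v)‖₊ : ℝ≥0∞))
    exact hmeasP
  have hswap : ∫⁻ x : E, A x = K := by
    rw [hAdef]
    have hm2 : AEMeasurable (Function.uncurry fun (x : E) (t : ℝ) =>
        (‖fderiv ℝ g (x - t • v)‖₊ : ℝ≥0∞)) (volume.prod (volume.restrict (Ioc (0:ℝ) 1))) :=
      (hmeasP.comp measurable_swap).aemeasurable
    rw [lintegral_lintegral_swap hm2]
    simp_rw [htrans]
    simp [Real.volume_Ioc]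
  have hAfin : ∀ᵐ x : E, A x < ∞ := ae_lt_top hAmeas (by rw [hswap]; exact hK)
  have hpt : ∀ᵐ x : E, (‖g (x - v) - g x‖₊ : ℝ≥0∞) ≤ A x * ‖v‖₊ := by
    filter_upwards [hAfin] with x hAx
    -- the derivative of t ↦ g (x - t • v)
    have hder : ∀ t : ℝ, HasDerivAt (fun t : ℝ => g (x - t • v))
        ((fderiv ℝ g (x - t • v)) (-v)) t := by
      intro t
      have h1 : HasDerivAt (fun t : ℝ => (x - t • v : E)) (-v) t := by
        simpa using ((hasDerivAt_id t).smul_const v).const_sub x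
      exact ((hg (x - t • v)).hasFDerivAt.comp_hasDerivAt t h1)
    have hmeasD : Measurable fun t : ℝ => (fderiv ℝ g (x - t • v)) (-v) := by
      have h2 : Measurable fun t : ℝ => fderiv ℝ g (x - t • v) :=
        hfd.comp ((measurable_const.sub (measurable_id.smul_const v)))
      exact (ContinuousLinearMap.apply ℝ ℝ (-v)).continuous.measurable.comp h2
    have hbound : ∀ t : ℝ, (‖(fderiv ℝ g (x - t • v)) (-v)‖₊ : ℝ≥0∞) ≤
        (‖fderiv ℝ g (x - t • v)‖₊ : ℝ≥0∞) * ‖v‖₊ := by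
      intro t
      have := (fderiv ℝ g (x - t • v)).le_opNNNorm (-v)
      rw [nnnorm_neg] at this
      exact_mod_cast this
    have hii : IntervalIntegrable (fun t : ℝ => (fderiv ℝ g (x - t • v)) (-v))
        volume 0 1 := by
      rw [intervalIntegrable_iff_integrableOn_Ioc_of_le zero_le_one]
      refine ⟨hmeasD.aestronglyMeasurable.restrict, ?_⟩
      show (∫⁻ t in Ioc (0:ℝ) 1, (‖(fderiv ℝ g (x - t • v)) (-v)‖₊ : ℝ≥0∞)) < ⊤
      calc ∫⁻ t in Ioc (0:ℝ) 1, (‖(fderiv ℝ g (x - t • v)) (-v)‖₊ : ℝ≥0∞)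
          ≤ ∫⁻ t in Ioc (0:ℝ) 1, (‖fderiv ℝ g (x - t • v)‖₊ : ℝ≥0∞) * ‖v‖₊ :=
            lintegral_mono fun t => hbound t
        _ = A x * ‖v‖₊ := lintegral_mul_const _
            ((hfd.comp (measurable_const.sub (measurable_id.smul_const v))).enorm)
        _ < ∞ := ENNReal.mul_lt_top hAx (by simp)
    have hftc : ∫ t in (0:ℝ)..1, (fderiv ℝ g (x - t • v)) (-v)
        = g (x - v) - g x := by
      have := intervalIntegral.integral_eq_sub_of_hasDerivAt
        (f := fun t : ℝ => g (x - t • v)) (fun t _ => hder t) hii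
      simpa using this
    rw [← hftc, intervalIntegral.integral_of_le zero_le_one]
    calc (‖∫ t in Ioc (0:ℝ) 1, (fderiv ℝ g (x - t • v)) (-v)‖₊ : ℝ≥0∞)
        ≤ ∫⁻ t in Ioc (0:ℝ) 1, (‖(fderiv ℝ g (x - t • v)) (-v)‖₊ : ℝ≥0∞) :=
          enorm_integral_le_lintegral_enorm _
      _ ≤ ∫⁻ t in Ioc (0:ℝ) 1, (‖fderiv ℝ g (x - t • v)‖₊ : ℝ≥0∞) * ‖v‖₊ :=
          lintegral_mono fun t => hbound t
      _ = A x * ‖v‖₊ := lintegral_mul_const _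
            ((hfd.comp (measurable_const.sub (measurable_id.smul_const v))).enorm)
  calc ∫⁻ x : E, (‖g (x - v) - g x‖₊ : ℝ≥0∞)
      ≤ ∫⁻ x : E, A x * ‖v‖₊ := lintegral_mono_ae hpt
    _ = K * ‖v‖₊ := by rw [lintegral_mul_const _ hAmeas, hswap]
    _ = ‖v‖₊ * K := mul_comm _ _

lemma key (f g : E → ℝ) (hfm : Measurable f) (hf : Integrable f volume)
    (hf1 : Integrable (fun x : E => ‖x‖ * |f x|) volume)
    (hgi : Integrable g volume) (hg : Differentiable ℝ g)
    (hgd : Integrable (fun x : E => ‖fderiv ℝ g x‖) volume) :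
    ∫ x : E, |(∫ y : E, f y * g (x - y)) - (∫ y : E, f y) * g x| ≤
      (∫ x : E, ‖fderiv ℝ g x‖) * ∫ x : E, ‖x‖ * |f x| := by
  have hgc : Continuous g := hg.continuous
  set I : ℝ := ∫ x : E, ‖fderiv ℝ g x‖ with hIdef
  set J : ℝ := ∫ x : E, ‖x‖ * |f x| with hJdef
  have hI0 : 0 ≤ I := integral_nonneg fun _ => norm_nonneg _
  have hJ0 : 0 ≤ J := integral_nonneg fun x => mul_nonneg (norm_nonneg _) (abs_nonneg _)
  set K : ℝ≥0∞ := ∫⁻ x : E, ‖fderiv ℝ g x‖₊ with hKdef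
  have hK : K = ENNReal.ofReal I := by
    rw [hKdef, hIdef, ofReal_integral_eq_lintegral_ofReal hgd
      (Filter.Eventually.of_forall fun x => norm_nonneg _)]
    simp_rw [ofReal_norm, enorm_eq_nnnorm]
  have hJ' : (∫⁻ x : E, (‖x‖₊ : ℝ≥0∞) * ‖f x‖₊) = ENNReal.ofReal J := by
    rw [hJdef, ofReal_integral_eq_lintegral_ofReal hf1
      (Filter.Eventually.of_forall fun x => mul_nonneg (norm_nonneg _) (abs_nonneg _))]
    congr 1
    ext x
    rw [ENNReal.ofReal_mul (norm_nonneg _), ofReal_norm,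
      ← Real.norm_eq_abs, ofReal_norm, enorm_eq_nnnorm, enorm_eq_nnnorm]
  set F : E → ℝ := fun x => (∫ y : E, f y * g (x - y)) - (∫ y : E, f y) * g x with hFdef
  -- measurability of F
  have hconvmeas : StronglyMeasurable fun x : E => ∫ y : E, f y * g (x - y) := by
    apply StronglyMeasurable.integral_prod_right'
      (f := fun p : E × E => f p.2 * g (p.1 - p.2))
    exact ((hfm.comp measurable_snd).mul
      (hgc.measurable.comp (measurable_fst.sub measurable_snd))).stronglyMeasurable
  have hFmeas : AEStronglyMeasurable F volume :=
    (hconvmeas.measurable.sub (hgc.measurable.const_mul _)).aestronglyMeasurable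
  -- a.e. sections integrable
  have hsect : ∀ᵐ x : E, Integrable (fun y : E => f y * g (x - y)) volume := by
    have := hf.ae_convolution_exists (L := ContinuousLinearMap.mul ℝ ℝ) hgi
    filter_upwards [this] with x hx
    simpa [ConvolutionExistsAt] using hx
  -- a.e. rewriting of F
  have hFrw : ∀ᵐ x : E, F x = ∫ y : E, f y * (g (x - y) - g x) := by
    filter_upwards [hsect] with x hx
    have h1 : (∫ y : E, f y) * g x = ∫ y : E, f y * g x := (integral_mul_const (g x) f).symm
    rw [hFdef]
    simp only [h1]
    rw [← integral_sub hx (hf.mul_const (g x))]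
    congr 1; ext y; ring
  -- pointwise lintegral bound
  have hFbound : ∀ᵐ x : E, (‖F x‖₊ : ℝ≥0∞) ≤
      ∫⁻ y : E, (‖f y‖₊ : ℝ≥0∞) * ‖g (x - y) - g x‖₊ := by
    filter_upwards [hFrw] with x hx
    rw [hx]
    calc (‖∫ y : E, f y * (g (x - y) - g x)‖₊ : ℝ≥0∞)
        ≤ ∫⁻ y : E, ‖f y * (g (x - y) - g x)‖₊ := enorm_integral_le_lintegral_enorm _
      _ = ∫⁻ y : E, (‖f y‖₊ : ℝ≥0∞) * ‖g (x - y) - g x‖₊ := by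
          simp_rw [nnnorm_mul, ENNReal.coe_mul]
  have hinmeas : Measurable fun p : E × E =>
      (‖f p.2‖₊ : ℝ≥0∞) * ‖g (p.1 - p.2) - g p.1‖₊ :=
    (hfm.comp measurable_snd).enorm.mul
      (((hgc.measurable.comp (measurable_fst.sub measurable_snd)).sub
        (hgc.measurable.comp measurable_fst)).enorm)
  have main : (∫⁻ x : E, ‖F x‖₊) ≤ ENNReal.ofReal (I * J) := by
    calc (∫⁻ x : E, ‖F x‖₊)
        ≤ ∫⁻ x : E, ∫⁻ y : E, (‖f y‖₊ : ℝ≥0∞) * ‖g (x - y) - g x‖₊ :=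
          lintegral_mono_ae hFbound
      _ = ∫⁻ y : E, ∫⁻ x : E, (‖f y‖₊ : ℝ≥0∞) * ‖g (x - y) - g x‖₊ := by
          apply lintegral_lintegral_swap
          exact hinmeas.aemeasurable
      _ = ∫⁻ y : E, (‖f y‖₊ : ℝ≥0∞) * ∫⁻ x : E, (‖g (x - y) - g x‖₊ : ℝ≥0∞) := by
          refine lintegral_congr fun y => ?_
          exact lintegral_const_mul _ (((hgc.measurable.comp
            (measurable_id.sub measurable_const)).sub hgc.measurable).enorm)
      _ ≤ ∫⁻ y : E, (‖f y‖₊ : ℝ≥0∞) * ((‖y‖₊ : ℝ≥0∞) * K) :=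
          lintegral_mono fun y => mul_le_mul_right (transA g hg y) _
      _ = (∫⁻ y : E, (‖y‖₊ : ℝ≥0∞) * ‖f y‖₊) * K := by
          rw [← lintegral_mul_const (f := fun y : E => (‖y‖₊ : ℝ≥0∞) * ‖f y‖₊) _
            (measurable_enorm.mul hfm.enorm)]
          refine lintegral_congr fun y => ?_
          ring
      _ = ENNReal.ofReal J * ENNReal.ofReal I := by rw [hJ', hK]
      _ = ENNReal.ofReal (I * J) := by
          rw [← ENNReal.ofReal_mul hJ0, mul_comm]
  have hLHS : ∫ x : E, |F x| = (∫⁻ x : E, (‖F x‖₊ : ℝ≥0∞)).toReal := by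
    simp_rw [← Real.norm_eq_abs]
    exact integral_norm_eq_lintegral_enorm hFmeas
  rw [hLHS]
  calc (∫⁻ x : E, (‖F x‖₊ : ℝ≥0∞)).toReal
      ≤ (ENNReal.ofReal (I * J)).toReal := by
        apply ENNReal.toReal_mono ENNReal.ofReal_ne_top main
    _ = I * J := ENNReal.toReal_ofReal (mul_nonneg hI0 hJ0)

/-- Convolution approximation estimate: there is a constant `C` such that for all
`f ∈ L¹(ℝⁿ, (1+|x|)dx)` and all `g ∈ W^{1,1}(ℝⁿ)`,
`‖f*g − (∫ f) g‖_{L¹} ≤ C ‖∇g‖_{L¹} ‖f‖_{L¹(|x|dx)}`. -/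
theorem convolution_approximation_estimate (n : ℕ) :
    ∃ C : ℝ, 0 < C ∧
      ∀ f g : EuclideanSpace ℝ (Fin n) → ℝ,
        Integrable f volume →
        Integrable (fun x => ‖x‖ * |f x|) volume →
        Integrable g volume →
        Differentiable ℝ g →
        Integrable (fun x => ‖fderiv ℝ g x‖) volume →
        ∫ x, |(∫ y, f y * g (x - y)) - (∫ y, f y) * g x| ≤
          C * (∫ x, ‖fderiv ℝ g x‖) * ∫ x, ‖x‖ * |f x| := by
  refine ⟨1, one_pos, fun f g hf hf1 hgi hg hgd => ?_⟩
  set f' : EuclideanSpace ℝ (Fin n) → ℝ := hf.1.mk f with hf'def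
  have hff' : f =ᵐ[volume] f' := hf.1.ae_eq_mk
  have hf'm : Measurable f' := hf.1.stronglyMeasurable_mk.measurable
  have h1 : ∀ x, (∫ y, f y * g (x - y)) = ∫ y, f' y * g (x - y) := fun x =>
    integral_congr_ae (hff'.mono fun y hy => by simp only [hy])
  have h2 : (∫ y, f y) = ∫ y, f' y := integral_congr_ae hff'
  have h3 : (∫ x, ‖x‖ * |f x|) = ∫ x, ‖x‖ * |f' x| :=
    integral_congr_ae (hff'.mono fun y hy => by simp only [hy])
  rw [h2, h3]
  simp only [h1]
  rw [one_mul]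
  exact key f' g hf'm (hf.congr hff') (hf1.congr (hff'.mono fun y hy => by simp only [hy]))
    hgi hg hgd
end
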